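/- For any s ∈ (0,1), one has the identity ∫₀^∞ sin(t)/t^{1+s} dt = Γ((1+s)/2)·Γ((1-s)/2) / (2·Γ(1+s)), where Γ is the Euler Gamma function. -/

import Mathlib

open MeasureTheory Set

open Real Filter

lemma exp_neg_mul_hasDerivAt (x t : ℝ) :
    HasDerivAt (fun t : ℝ => Real.exp (-(x * t))) (-(x * Real.exp (-(x * t)))) t := by
  have h : HasDerivAt (fun t : ℝ => -(x * t)) (-x) t := by
    simpa using ((hasDerivAt_id t).const_mul x).fun_neg
  simpa [mul_comm, Function.comp_def] using (Real.hasDerivAt_exp (-(x*t))).comp t h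

-- L2: Laplace transform of sin
lemma lap_sin {x : ℝ} (hx : 0 < x) :
    ∫ t in Ioi (0:ℝ), Real.exp (-(x * t)) * Real.sin t = 1 / (1 + x ^ 2) := by
  have hd : ∀ t ∈ Ici (0:ℝ), HasDerivAt
      (fun t : ℝ => -(Real.exp (-(x*t)) * (x * Real.sin t + Real.cos t)) / (1 + x ^ 2))
      (Real.exp (-(x*t)) * Real.sin t) t := by
    intro t _
    have h1 := exp_neg_mul_hasDerivAt x t
    have h2 : HasDerivAt (fun t : ℝ => x * Real.sin t + Real.cos t)
        (x * Real.cos t - Real.sin t) t := by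
      simpa [sub_eq_add_neg] using ((Real.hasDerivAt_sin t).const_mul x).fun_add (Real.hasDerivAt_cos t)
    have h3 := ((h1.fun_mul h2).fun_neg).div_const (1 + x ^ 2)
    have hx2 : (1 : ℝ) + x ^ 2 ≠ 0 := by positivity
    refine h3.congr_deriv ?_
    rw [div_eq_iff hx2]
    ring
  have hint : IntegrableOn (fun t => Real.exp (-(x*t)) * Real.sin t) (Ioi (0:ℝ)) := by
    apply Integrable.mono' (exp_neg_integrableOn_Ioi 0 hx)
    · exact (((Real.continuous_exp.comp (continuous_const.mul continuous_id).neg).mul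
        Real.continuous_sin).aestronglyMeasurable).restrict
    · filter_upwards with t
      rw [norm_mul, Real.norm_eq_abs, Real.norm_eq_abs, Real.abs_exp, neg_mul]
      exact mul_le_of_le_one_right (Real.exp_pos _).le (abs_sin_le_one t)
  have htend : Tendsto (fun t : ℝ => -(Real.exp (-(x*t)) * (x * Real.sin t + Real.cos t)) / (1 + x ^ 2))
      atTop (nhds 0) := by
    have hb : Tendsto (fun t : ℝ => Real.exp (-(x*t))) atTop (nhds 0) := by
      have h : Tendsto (fun t : ℝ => -(x * t)) atTop atBot :=
        tendsto_neg_atTop_atBot.comp (Tendsto.const_mul_atTop hx tendsto_id)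
      exact (Real.tendsto_exp_atBot).comp h
    apply squeeze_zero_norm (a := fun t => Real.exp (-(x*t)) * (x + 1) / (1 + x ^ 2))
    · intro t
      rw [norm_div, norm_neg, norm_mul, Real.norm_eq_abs (1 + x ^ 2),
        abs_of_pos (by positivity : (0:ℝ) < 1 + x ^ 2), Real.norm_eq_abs, Real.abs_exp]
      apply div_le_div_of_nonneg_right ?_ (by positivity)
      · apply mul_le_mul_of_nonneg_left ?_ (Real.exp_pos _).le
        calc ‖x * Real.sin t + Real.cos t‖ ≤ ‖x * Real.sin t‖ + ‖Real.cos t‖ := norm_add_le _ _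
          _ ≤ |x| * 1 + 1 := by
              rw [norm_mul]
              gcongr
              · exact le_of_eq (Real.norm_eq_abs x)
              · simpa using abs_sin_le_one t
              · simpa using abs_cos_le_one t
          _ = x + 1 := by rw [abs_of_pos hx, mul_one]
    · simpa using (hb.mul_const (x+1)).div_const (1 + x ^ 2)
  have := integral_Ioi_of_hasDerivAt_of_tendsto' hd hint htend
  rw [this]
  simp
  rw [neg_div, neg_neg, one_div]

-- L3: Gamma-Laplace
lemma gamma_lap {t s : ℝ} (ht : 0 < t) (hs : -1 < s) :
    ∫ x in Ioi (0:ℝ), x ^ s * Real.exp (-(t * x)) = (1/t) ^ (1+s) * Real.Gamma (1+s) := by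
  have := Real.integral_rpow_mul_exp_neg_mul_Ioi (a := 1+s) (r := t) (by linarith) ht
  simpa using this

lemma int_gamma_lap {t s : ℝ} (ht : 0 < t) (hs : -1 < s) :
    IntegrableOn (fun x : ℝ => x ^ s * Real.exp (-(t * x))) (Ioi 0) := by
  have := integrableOn_rpow_mul_exp_neg_mul_rpow hs one_pos ht
  apply this.congr_fun ?_ measurableSet_Ioi
  intro x hx
  simp [Real.rpow_one, neg_mul]

-- L4: Gaussian
lemma gauss_rpow {y s : ℝ} (hy : 0 < y) (hs : -1 < s) :
    ∫ x in Ioi (0:ℝ), x ^ s * Real.exp (-(y * x ^ 2)) =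
      (1/2) * ((1/y) ^ ((s+1)/2) * Real.Gamma ((s+1)/2)) := by
  have key := MeasureTheory.integral_comp_rpow_Ioi_of_pos
    (g := fun u => (1/2) * (u ^ ((s-1)/2) * Real.exp (-(y * u)))) (p := 2) two_pos
  have h2 : (s+1)/2 = 1 + (s-1)/2 := by ring
  rw [h2, ← gamma_lap hy (by linarith : (-1:ℝ) < (s-1)/2), ← integral_const_mul, ← key]
  apply setIntegral_congr_fun measurableSet_Ioi
  intro x hx
  have hx0 : (0:ℝ) < x := hx
  have e2 : (x : ℝ) ^ (2:ℝ) = x ^ 2 := by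
    rw [show (2:ℝ) = ((2:ℕ):ℝ) by norm_num, Real.rpow_natCast]
  have e3 : ((x ^ 2 : ℝ)) ^ ((s-1)/2) = x ^ (s-1) := by
    rw [← Real.rpow_natCast x 2, ← Real.rpow_mul hx0.le]
    norm_num
    congr 1
    ring
  have hxs : x ^ s = x * x ^ (s-1) := by
    have h := Real.rpow_add hx0 1 (s-1)
    rw [show 1+(s-1) = s by ring, Real.rpow_one] at h
    exact h
  simp only []
  rw [smul_eq_mul, show ((2:ℝ)-1) = (1:ℝ) by norm_num, Real.rpow_one, e2, e3, hxs]
  ring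

lemma meas_sin_div (s : ℝ) : Measurable (fun t : ℝ => Real.sin t / t ^ (1+s)) := by
  fun_prop

-- L1
lemma int_sin_div {s : ℝ} (hs0 : 0 < s) (hs1 : s < 1) :
    IntegrableOn (fun t : ℝ => Real.sin t / t ^ (1+s)) (Ioi 0) := by
  have h1 : IntegrableOn (fun t : ℝ => Real.sin t / t ^ (1+s)) (Ioc 0 1) := by
    have hb : IntegrableOn (fun t : ℝ => t ^ (-s)) (Ioc 0 1) := by
      have := intervalIntegral.intervalIntegrable_rpow' (a := 0) (b := 1)
        (by linarith : (-1:ℝ) < -s)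
      rwa [intervalIntegrable_iff_integrableOn_Ioc_of_le zero_le_one] at this
    apply Integrable.mono' hb ((meas_sin_div s).aestronglyMeasurable.restrict)
    filter_upwards [ae_restrict_mem measurableSet_Ioc] with t ht
    have ht0 : 0 < t := ht.1
    have htp : (0:ℝ) < t ^ (1+s) := Real.rpow_pos_of_pos ht0 _
    rw [norm_div, Real.norm_eq_abs, Real.norm_eq_abs, abs_of_pos htp, div_le_iff₀ htp]
    calc |Real.sin t| ≤ |t| := Real.abs_sin_le_abs
      _ = t := abs_of_pos ht0
      _ = t ^ (-s) * t ^ (1+s) := by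
          rw [← Real.rpow_add ht0]
          norm_num
  have h2 : IntegrableOn (fun t : ℝ => Real.sin t / t ^ (1+s)) (Ioi 1) := by
    have hb : IntegrableOn (fun t : ℝ => t ^ (-(1+s))) (Ioi 1) :=
      integrableOn_Ioi_rpow_of_lt (by linarith) one_pos
    apply Integrable.mono' hb ((meas_sin_div s).aestronglyMeasurable.restrict)
    filter_upwards [ae_restrict_mem measurableSet_Ioi] with t ht
    have ht0 : (0:ℝ) < t := lt_trans one_pos ht
    have htp : (0:ℝ) < t ^ (1+s) := Real.rpow_pos_of_pos ht0 _
    rw [norm_div, Real.norm_eq_abs, Real.norm_eq_abs, abs_of_pos htp, div_le_iff₀ htp,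
      Real.rpow_neg ht0.le, inv_mul_cancel₀ (ne_of_gt htp)]
    exact Real.abs_sin_le_one t
  have := h1.union h2
  rwa [Ioc_union_Ioi_eq_Ioi zero_le_one] at this

-- L5
lemma int_rpow_div {s : ℝ} (hs0 : 0 < s) (hs1 : s < 1) :
    IntegrableOn (fun x : ℝ => x ^ s / (1 + x ^ 2)) (Ioi 0) := by
  have hm : Measurable (fun x : ℝ => x ^ s / (1 + x ^ 2)) := by fun_prop
  have h1 : IntegrableOn (fun x : ℝ => x ^ s / (1 + x ^ 2)) (Ioc 0 1) := by
    have hc : IntegrableOn (fun _ : ℝ => (1:ℝ)) (Ioc 0 1) :=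
      (integrableOn_const_iff).mpr (Or.inr measure_Ioc_lt_top)
    apply Integrable.mono' hc (hm.aestronglyMeasurable.restrict)
    filter_upwards [ae_restrict_mem measurableSet_Ioc] with x hx
    have hx0 : 0 < x := hx.1
    have h2 : (0:ℝ) < 1 + x ^ 2 := by positivity
    rw [Real.norm_eq_abs, abs_of_nonneg (by positivity), div_le_one h2]
    nlinarith [Real.rpow_le_one hx0.le hx.2 hs0.le]
  have h2 : IntegrableOn (fun x : ℝ => x ^ s / (1 + x ^ 2)) (Ioi 1) := by
    have hb : IntegrableOn (fun x : ℝ => x ^ (s - 2)) (Ioi 1) :=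
      integrableOn_Ioi_rpow_of_lt (by linarith) one_pos
    apply Integrable.mono' hb (hm.aestronglyMeasurable.restrict)
    filter_upwards [ae_restrict_mem measurableSet_Ioi] with x hx
    have hx0 : (0:ℝ) < x := lt_trans one_pos hx
    have h2 : (0:ℝ) < 1 + x ^ 2 := by positivity
    rw [Real.norm_eq_abs, abs_of_nonneg (by positivity), div_le_iff₀ h2, Real.rpow_sub hx0,
      div_mul_eq_mul_div, le_div_iff₀ (by positivity : (0:ℝ) < x ^ (2:ℝ))]
    have : (x:ℝ) ^ (2:ℝ) = x ^ 2 := by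
      rw [show (2:ℝ) = ((2:ℕ):ℝ) by norm_num, Real.rpow_natCast]
    rw [this]
    nlinarith [Real.rpow_pos_of_pos hx0 s, sq_nonneg x]
  have := h1.union h2
  rwa [Ioc_union_Ioi_eq_Ioi zero_le_one] at this

lemma exp_int {c : ℝ} (hc : 0 < c) : ∫ y in Ioi (0:ℝ), Real.exp (-(c*y)) = 1/c := by
  have h := gamma_lap (t := c) (s := 0) hc (by norm_num)
  simpa [Real.Gamma_one] using h

noncomputable def Faux (s x y : ℝ) : ℝ := x ^ s * (Real.exp (-y) * Real.exp (-(y * x ^ 2)))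

lemma Faux_meas (s : ℝ) : Measurable (Function.uncurry (Faux s)) := by
  unfold Faux Function.uncurry
  fun_prop

-- L6
lemma int_rpow_div_eq {s : ℝ} (hs0 : 0 < s) (hs1 : s < 1) :
    ∫ x in Ioi (0:ℝ), x ^ s / (1 + x ^ 2)
      = Real.Gamma ((1+s)/2) * Real.Gamma ((1-s)/2) / 2 := by
  -- step A
  have stepA : ∀ x : ℝ, 0 < x → ∫ y in Ioi (0:ℝ), Faux s x y = x ^ s / (1 + x ^ 2) := by
    intro x hx
    have hc : (0:ℝ) < 1 + x ^ 2 := by positivity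
    unfold Faux
    rw [integral_const_mul]
    have : ∀ y : ℝ, Real.exp (-y) * Real.exp (-(y * x ^ 2)) = Real.exp (-((1 + x^2) * y)) := by
      intro y
      rw [← Real.exp_add]
      ring_nf
    simp_rw [this, exp_int hc]
    ring
  -- sections integrable in y
  have hsec : ∀ x : ℝ, 0 < x → Integrable (Faux s x) (volume.restrict (Ioi 0)) := by
    intro x hx
    have hc : (0:ℝ) < 1 + x ^ 2 := by positivity
    have h1 : Integrable (fun y : ℝ => x ^ s * Real.exp (-(1 + x^2) * y))
        (volume.restrict (Ioi 0)) := (exp_neg_integrableOn_Ioi 0 hc).const_mul _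
    apply h1.congr
    filter_upwards with y
    unfold Faux
    rw [← Real.exp_add]
    ring_nf
  -- joint integrability
  have hint : Integrable (Function.uncurry (Faux s))
      ((volume.restrict (Ioi (0:ℝ))).prod (volume.restrict (Ioi (0:ℝ)))) := by
    rw [MeasureTheory.integrable_prod_iff (Faux_meas s).aestronglyMeasurable]
    constructor
    · filter_upwards [ae_restrict_mem measurableSet_Ioi] with x hx
      exact hsec x hx
    · apply Integrable.congr (int_rpow_div hs0 hs1)
      filter_upwards [ae_restrict_mem measurableSet_Ioi] with x hx
      have hx0 : (0:ℝ) < x := hx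
      have hn : (fun y => ‖Faux s x y‖) = Faux s x := by
        funext y
        rw [Real.norm_eq_abs, abs_of_nonneg (by unfold Faux; positivity)]
      simp only [Function.uncurry_apply_pair]
      rw [hn, stepA x hx]
  -- step B
  have stepB : ∀ y : ℝ, 0 < y → ∫ x in Ioi (0:ℝ), Faux s x y
      = Real.exp (-y) * ((1/2) * ((1/y) ^ ((s+1)/2) * Real.Gamma ((s+1)/2))) := by
    intro y hy
    rw [← gauss_rpow hy (by linarith : (-1:ℝ) < s), ← integral_const_mul]
    apply setIntegral_congr_fun measurableSet_Ioi
    intro x hx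
    unfold Faux
    ring
  calc ∫ x in Ioi (0:ℝ), x ^ s / (1 + x ^ 2)
      = ∫ x in Ioi (0:ℝ), ∫ y in Ioi (0:ℝ), Faux s x y := by
        symm
        apply setIntegral_congr_fun measurableSet_Ioi
        intro x hx
        exact stepA x hx
    _ = ∫ y in Ioi (0:ℝ), ∫ x in Ioi (0:ℝ), Faux s x y := integral_integral_swap hint
    _ = ∫ y in Ioi (0:ℝ), Real.exp (-y) * ((1/2) * ((1/y) ^ ((s+1)/2) * Real.Gamma ((s+1)/2))) := by
        apply setIntegral_congr_fun measurableSet_Ioi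
        intro y hy
        exact stepB y hy
    _ = (1/2) * Real.Gamma ((s+1)/2) * ∫ y in Ioi (0:ℝ), y ^ (-((s+1)/2)) * Real.exp (-(1*y)) := by
        rw [← integral_const_mul]
        apply setIntegral_congr_fun measurableSet_Ioi
        intro y hy
        have hy0 : (0:ℝ) < y := hy
        have h3 : (1/y) ^ ((s+1)/2) = y ^ (-((s+1)/2)) := by
          rw [one_div, Real.inv_rpow hy0.le, ← Real.rpow_neg hy0.le]
        simp only [one_mul, h3]
        ring
    _ = Real.Gamma ((1+s)/2) * Real.Gamma ((1-s)/2) / 2 := by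
        rw [gamma_lap one_pos (by linarith : (-1:ℝ) < -((s+1)/2))]
        rw [show (1:ℝ) + -((s+1)/2) = (1-s)/2 by ring, show (s+1)/2 = (1+s)/2 by ring]
        norm_num
        ring

noncomputable def Gaux (s t x : ℝ) : ℝ := Real.sin t * (x ^ s * Real.exp (-(t * x)))

lemma Gaux_meas (s : ℝ) : Measurable (Function.uncurry (Gaux s)) := by
  unfold Gaux Function.uncurry
  fun_prop

theorem integral_sin_div_rpow (s : ℝ) (hs : s ∈ Set.Ioo (0 : ℝ) 1) :
    ∫ t in Set.Ioi (0 : ℝ), Real.sin t / t ^ (1 + s)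
      = Real.Gamma ((1 + s) / 2) * Real.Gamma ((1 - s) / 2) / (2 * Real.Gamma (1 + s)) := by
  obtain ⟨hs0, hs1⟩ := hs
  have hsm : (-1:ℝ) < s := by linarith
  have hG : 0 < Real.Gamma (1+s) := Real.Gamma_pos_of_pos (by linarith)
  -- step A
  have stepA : ∀ t : ℝ, 0 < t → ∫ x in Ioi (0:ℝ), Gaux s t x
      = Real.sin t * ((1/t) ^ (1+s) * Real.Gamma (1+s)) := by
    intro t ht
    unfold Gaux
    rw [integral_const_mul, gamma_lap ht hsm]
  have hsec : ∀ t : ℝ, 0 < t → Integrable (Gaux s t) (volume.restrict (Ioi 0)) := by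
    intro t ht
    have := (int_gamma_lap ht hsm).const_mul (Real.sin t)
    exact this
  -- norm integral
  have hnormval : ∀ t : ℝ, 0 < t → ∫ x in Ioi (0:ℝ), ‖Gaux s t x‖
      = |Real.sin t / t ^ (1+s)| * Real.Gamma (1+s) := by
    intro t ht
    have htp : (0:ℝ) < t ^ (1+s) := Real.rpow_pos_of_pos ht _
    have h1 : ∫ x in Ioi (0:ℝ), ‖Gaux s t x‖
        = ∫ x in Ioi (0:ℝ), |Real.sin t| * (x ^ s * Real.exp (-(t * x))) := by
      apply setIntegral_congr_fun measurableSet_Ioi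
      intro x hx
      have hx0 : (0:ℝ) < x := hx
      show ‖Gaux s t x‖ = |Real.sin t| * (x ^ s * Real.exp (-(t * x)))
      unfold Gaux
      rw [Real.norm_eq_abs, abs_mul, abs_of_nonneg (by positivity : (0:ℝ) ≤ x ^ s * Real.exp (-(t * x)))]
    rw [h1, integral_const_mul, gamma_lap ht hsm, abs_div, abs_of_pos htp,
      one_div, Real.inv_rpow ht.le]
    ring
  -- joint integrability
  have hint : Integrable (Function.uncurry (Gaux s))
      ((volume.restrict (Ioi (0:ℝ))).prod (volume.restrict (Ioi (0:ℝ)))) := by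
    rw [MeasureTheory.integrable_prod_iff (Gaux_meas s).aestronglyMeasurable]
    constructor
    · filter_upwards [ae_restrict_mem measurableSet_Ioi] with t ht
      exact hsec t ht
    · apply Integrable.congr (((int_sin_div hs0 hs1).abs).mul_const (Real.Gamma (1+s)))
      filter_upwards [ae_restrict_mem measurableSet_Ioi] with t ht
      simp only [Function.uncurry_apply_pair]
      rw [← hnormval t ht]
  -- inner integral over t
  have stepB : ∀ x : ℝ, 0 < x → ∫ t in Ioi (0:ℝ), Gaux s t x
      = x ^ s * (1 / (1 + x ^ 2)) := by
    intro x hx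
    rw [← lap_sin hx, ← integral_const_mul]
    apply setIntegral_congr_fun measurableSet_Ioi
    intro t ht
    show Gaux s t x = x ^ s * (Real.exp (-(x * t)) * Real.sin t)
    unfold Gaux
    rw [mul_comm x t]
    ring
  calc ∫ t in Ioi (0:ℝ), Real.sin t / t ^ (1 + s)
      = ∫ t in Ioi (0:ℝ), (Real.Gamma (1+s))⁻¹ * ∫ x in Ioi (0:ℝ), Gaux s t x := by
        symm
        apply setIntegral_congr_fun measurableSet_Ioi
        intro t ht
        have ht0 : (0:ℝ) < t := ht
        show (Real.Gamma (1+s))⁻¹ * ∫ x in Ioi (0:ℝ), Gaux s t x = Real.sin t / t ^ (1 + s)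
        rw [stepA t ht0, one_div, Real.inv_rpow ht0.le, div_eq_mul_inv]
        field_simp
    _ = (Real.Gamma (1+s))⁻¹ * ∫ t in Ioi (0:ℝ), ∫ x in Ioi (0:ℝ), Gaux s t x :=
        integral_const_mul _ _
    _ = (Real.Gamma (1+s))⁻¹ * ∫ x in Ioi (0:ℝ), ∫ t in Ioi (0:ℝ), Gaux s t x := by
        rw [integral_integral_swap hint]
    _ = (Real.Gamma (1+s))⁻¹ * ∫ x in Ioi (0:ℝ), x ^ s / (1 + x ^ 2) := by
        congr 1
        apply setIntegral_congr_fun measurableSet_Ioi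
        intro x hx
        show (∫ t in Ioi (0:ℝ), Gaux s t x) = x ^ s / (1 + x ^ 2)
        rw [stepB x hx, mul_one_div]
    _ = Real.Gamma ((1 + s) / 2) * Real.Gamma ((1 - s) / 2) / (2 * Real.Gamma (1 + s)) := by
        rw [int_rpow_div_eq hs0 hs1, eq_div_iff (by positivity : (2:ℝ) * Real.Gamma (1+s) ≠ 0)]
        calc (Real.Gamma (1+s))⁻¹ * (Real.Gamma ((1+s)/2) * Real.Gamma ((1-s)/2) / 2)
              * (2 * Real.Gamma (1+s))
            = (Real.Gamma ((1+s)/2) * Real.Gamma ((1-s)/2))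
              * ((Real.Gamma (1+s))⁻¹ * Real.Gamma (1+s)) := by ring
          _ = Real.Gamma ((1+s)/2) * Real.Gamma ((1-s)/2) := by
              rw [inv_mul_cancel₀ hG.ne', mul_one]
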